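/- In the group G_Δ = ⟨a, b, c | aba = b, bcb = c, cac = a⟩, every element can be written in the form a^m * b^n * c^p for some integers m, n, p. -/

import Mathlib

/-- Relations for `G_Δ = ⟨a, b, c | aba = b, bcb = c, cac = a⟩`. -/
def triangleRels : Set (FreeGroup (Fin 3)) :=
  { FreeGroup.of 0 * FreeGroup.of 1 * FreeGroup.of 0 * (FreeGroup.of 1)⁻¹,
    FreeGroup.of 1 * FreeGroup.of 2 * FreeGroup.of 1 * (FreeGroup.of 2)⁻¹,
    FreeGroup.of 2 * FreeGroup.of 0 * FreeGroup.of 2 * (FreeGroup.of 0)⁻¹ }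

/-- The twisted RAAG of the directed triangle. -/
abbrev GDelta : Type := PresentedGroup triangleRels

section Aux
variable {G : Type*} [Group G] {x y : G}

lemma auxA1 (h : x * y * x = y) : y * x = x⁻¹ * y := by
  conv_rhs => rw [← h]
  group
lemma auxA2 (h : x * y * x = y) : y * x⁻¹ = x * y := by
  conv_lhs => rw [← h]
  group
lemma auxA3 (h : x * y * x = y) : y⁻¹ * x = x⁻¹ * y⁻¹ := by
  conv_lhs => rw [← h]
  group
lemma auxA4 (h : x * y * x = y) : y⁻¹ * x⁻¹ = x * y⁻¹ := by
  conv_rhs => rw [← h]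
  group
lemma auxA5 (h : x * y * x = y) : x * y = y * x⁻¹ := by
  conv_rhs => rw [← h]
  group
lemma auxA6 (h : x * y * x = y) : x⁻¹ * y = y * x := by
  conv_lhs => rw [← h]
  group
end Aux

namespace GDeltaNF

local notation "a" => (PresentedGroup.of 0 : GDelta)
local notation "b" => (PresentedGroup.of 1 : GDelta)
local notation "c" => (PresentedGroup.of 2 : GDelta)

lemma rel_of_mem {r : FreeGroup (Fin 3)} (hr : r ∈ triangleRels) :
    PresentedGroup.mk triangleRels r = 1 := by
  refine (QuotientGroup.eq_one_iff _).mpr ?_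
  exact Subgroup.subset_normalClosure hr

lemma r1 : a * b * a = b := by
  have h := rel_of_mem (r := FreeGroup.of 0 * FreeGroup.of 1 * FreeGroup.of 0 * (FreeGroup.of 1)⁻¹)
    (by simp [triangleRels])
  simp only [map_mul, map_inv] at h
  exact mul_inv_eq_one.mp h

lemma r2 : b * c * b = c := by
  have h := rel_of_mem (r := FreeGroup.of 1 * FreeGroup.of 2 * FreeGroup.of 1 * (FreeGroup.of 2)⁻¹)
    (by simp [triangleRels])
  simp only [map_mul, map_inv] at h
  exact mul_inv_eq_one.mp h

lemma r3 : c * a * c = a := by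
  have h := rel_of_mem (r := FreeGroup.of 2 * FreeGroup.of 0 * FreeGroup.of 2 * (FreeGroup.of 0)⁻¹)
    (by simp [triangleRels])
  simp only [map_mul, map_inv] at h
  exact mul_inv_eq_one.mp h

end GDeltaNF

namespace GDeltaNF

local notation "a" => (PresentedGroup.of 0 : GDelta)
local notation "b" => (PresentedGroup.of 1 : GDelta)
local notation "c" => (PresentedGroup.of 2 : GDelta)

lemma b_pow_a (n : ℤ) : ∃ e : ℤ, b ^ n * a = a ^ e * b ^ n ∧ b ^ n * a⁻¹ = a ^ (-e) * b ^ n := by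
  induction n using Int.induction_on with
  | zero => exact ⟨1, by simp⟩
  | succ k ih =>
    obtain ⟨e, h1, h2⟩ := ih
    refine ⟨-e, ?_, ?_⟩
    · rw [zpow_add_one, mul_assoc, auxA1 r1, ← mul_assoc, h2, mul_assoc, ← zpow_add_one]
    · rw [zpow_add_one, mul_assoc, auxA2 r1, ← mul_assoc, h1, mul_assoc, ← zpow_add_one, neg_neg]
  | pred k ih =>
    obtain ⟨e, h1, h2⟩ := ih
    refine ⟨-e, ?_, ?_⟩
    · rw [zpow_sub_one, mul_assoc, auxA3 r1, ← mul_assoc, h2, mul_assoc, ← zpow_sub_one]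
    · rw [zpow_sub_one, mul_assoc, auxA4 r1, ← mul_assoc, h1, mul_assoc, ← zpow_sub_one, neg_neg]

end GDeltaNF

namespace GDeltaNF

local notation "a" => (PresentedGroup.of 0 : GDelta)
local notation "b" => (PresentedGroup.of 1 : GDelta)
local notation "c" => (PresentedGroup.of 2 : GDelta)

lemma c_pow_b (p : ℤ) : ∃ e : ℤ, c ^ p * b = b ^ e * c ^ p ∧ c ^ p * b⁻¹ = b ^ (-e) * c ^ p := by
  induction p using Int.induction_on with
  | zero => exact ⟨1, by simp⟩
  | succ k ih =>
    obtain ⟨e, h1, h2⟩ := ih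
    refine ⟨-e, ?_, ?_⟩
    · rw [zpow_add_one, mul_assoc, auxA1 r2, ← mul_assoc, h2, mul_assoc, ← zpow_add_one]
    · rw [zpow_add_one, mul_assoc, auxA2 r2, ← mul_assoc, h1, mul_assoc, ← zpow_add_one, neg_neg]
  | pred k ih =>
    obtain ⟨e, h1, h2⟩ := ih
    refine ⟨-e, ?_, ?_⟩
    · rw [zpow_sub_one, mul_assoc, auxA3 r2, ← mul_assoc, h2, mul_assoc, ← zpow_sub_one]
    · rw [zpow_sub_one, mul_assoc, auxA4 r2, ← mul_assoc, h1, mul_assoc, ← zpow_sub_one, neg_neg]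

lemma c_pow_a (p : ℤ) : c ^ p * a = a * c ^ (-p) := by
  induction p using Int.induction_on with
  | zero => simp
  | succ k ih =>
    rw [zpow_add_one, mul_assoc, auxA5 r3, ← mul_assoc, ih, mul_assoc, ← zpow_sub_one]
    ring_nf
  | pred k ih =>
    rw [zpow_sub_one, mul_assoc, auxA6 r3, ← mul_assoc, ih, mul_assoc, ← zpow_add_one]
    ring_nf

lemma c_pow_a_inv (p : ℤ) : c ^ p * a⁻¹ = a⁻¹ * c ^ (-p) := by
  have h := congrArg Inv.inv (c_pow_a p)
  simp only [mul_inv_rev, ← zpow_neg, neg_neg] at h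
  exact h.symm

end GDeltaNF

namespace GDeltaNF

local notation "a" => (PresentedGroup.of 0 : GDelta)
local notation "b" => (PresentedGroup.of 1 : GDelta)
local notation "c" => (PresentedGroup.of 2 : GDelta)

lemma step_gen (i : Fin 3) (m n p : ℤ) :
    ∃ m' n' p' : ℤ,
      a ^ m * b ^ n * c ^ p * (PresentedGroup.of i : GDelta) = a ^ m' * b ^ n' * c ^ p' := by
  match i with
  | 0 =>
    obtain ⟨e, h1, _⟩ := b_pow_a n
    refine ⟨m + e, n, -p, ?_⟩
    rw [mul_assoc (a ^ m * b ^ n), c_pow_a, ← mul_assoc, mul_assoc (a ^ m), h1,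
      ← mul_assoc, ← zpow_add]
  | 1 =>
    obtain ⟨e, h1, _⟩ := c_pow_b p
    refine ⟨m, n + e, p, ?_⟩
    rw [mul_assoc (a ^ m * b ^ n), h1, ← mul_assoc, mul_assoc (a ^ m), ← zpow_add]
  | 2 =>
    exact ⟨m, n, p + 1, by rw [mul_assoc (a ^ m * b ^ n), ← zpow_add_one]⟩

lemma step_gen_inv (i : Fin 3) (m n p : ℤ) :
    ∃ m' n' p' : ℤ,
      a ^ m * b ^ n * c ^ p * (PresentedGroup.of i : GDelta)⁻¹ = a ^ m' * b ^ n' * c ^ p' := by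
  match i with
  | 0 =>
    obtain ⟨e, _, h2⟩ := b_pow_a n
    refine ⟨m + -e, n, -p, ?_⟩
    rw [mul_assoc (a ^ m * b ^ n), c_pow_a_inv, ← mul_assoc, mul_assoc (a ^ m), h2,
      ← mul_assoc, ← zpow_add]
  | 1 =>
    obtain ⟨e, _, h2⟩ := c_pow_b p
    refine ⟨m, n + -e, p, ?_⟩
    rw [mul_assoc (a ^ m * b ^ n), h2, ← mul_assoc, mul_assoc (a ^ m), ← zpow_add]
  | 2 =>
    exact ⟨m, n, p - 1, by rw [mul_assoc (a ^ m * b ^ n), ← zpow_sub_one]⟩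

end GDeltaNF

theorem gdelta_normal_form (g : GDelta) :
    ∃ m n p : ℤ,
      g = (PresentedGroup.of 0 : GDelta) ^ m * PresentedGroup.of 1 ^ n *
            PresentedGroup.of 2 ^ p := by
  induction g using PresentedGroup.induction_on with
  | H z =>
    have key : ∀ m n p : ℤ, ∃ m' n' p' : ℤ,
        (PresentedGroup.of 0 : GDelta) ^ m * PresentedGroup.of 1 ^ n * PresentedGroup.of 2 ^ p *
          PresentedGroup.mk triangleRels z
        = PresentedGroup.of 0 ^ m' * PresentedGroup.of 1 ^ n' * PresentedGroup.of 2 ^ p' := by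
      induction z using FreeGroup.induction_on with
      | C1 => exact fun m n p => ⟨m, n, p, by simp⟩
      | of i => exact fun m n p => GDeltaNF.step_gen i m n p
      | inv_of i _ =>
        intro m n p
        rw [map_inv]
        exact GDeltaNF.step_gen_inv i m n p
      | mul x y hx hy =>
        intro m n p
        obtain ⟨m1, n1, p1, h1⟩ := hx m n p
        obtain ⟨m2, n2, p2, h2⟩ := hy m1 n1 p1
        exact ⟨m2, n2, p2, by rw [map_mul, ← mul_assoc, h1, h2]⟩
    obtain ⟨m, n, p, h⟩ := key 0 0 0
    exact ⟨m, n, p, by simpa using h⟩
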